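/- Let m be a positive integer and let σ, τ be two bijections from Fin m to Fin m (schedules of m unit-size jobs, where the value of the bijection at a job is the job's position). Then the Spearman distance equals twice the tardiness: ∑_{i} |pos(i,τ) − pos(i,σ)| = 2 · ∑_{i} max(0, pos(i,τ) − pos(i,σ)), where pos(i,π) denotes the position π(i) of job i in schedule π. -/
import Mathlib

/-- Proposition 1 (unit-size jobs): the Spearman distance between two schedules
equals twice the tardiness, where a schedule of `m` unit-size jobs is a bijection
`Fin m ≃ Fin m` assigning each job its position. -/
theorem spearman_eq_two_mul_tardiness (m : ℕ) (hm : 0 < m)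
    (σ τ : Equiv.Perm (Fin m)) :
    ∑ i : Fin m, |((τ i : ℕ) : ℤ) - ((σ i : ℕ) : ℤ)|
      = 2 * ∑ i : Fin m, max 0 (((τ i : ℕ) : ℤ) - ((σ i : ℕ) : ℤ)) := by
  have habs : ∀ x : ℤ, |x| = 2 * max 0 x - x := by
    intro x; rcases le_total 0 x with h | h
    · rw [abs_of_nonneg h, max_eq_right h]; ring
    · rw [abs_of_nonpos h, max_eq_left h]; ring
  have hsum : ∑ i : Fin m, (((τ i : ℕ) : ℤ) - ((σ i : ℕ) : ℤ)) = 0 := by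
    rw [Finset.sum_sub_distrib]
    rw [Equiv.sum_comp τ (fun j : Fin m => ((j : ℕ) : ℤ)),
        Equiv.sum_comp σ (fun j : Fin m => ((j : ℕ) : ℤ)), sub_self]
  calc ∑ i : Fin m, |((τ i : ℕ) : ℤ) - ((σ i : ℕ) : ℤ)|
      = ∑ i : Fin m, (2 * max 0 (((τ i : ℕ) : ℤ) - ((σ i : ℕ) : ℤ))
          - (((τ i : ℕ) : ℤ) - ((σ i : ℕ) : ℤ))) := by
        simp_rw [habs]
    _ = 2 * ∑ i : Fin m, max 0 (((τ i : ℕ) : ℤ) - ((σ i : ℕ) : ℤ)) := by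
        rw [Finset.sum_sub_distrib, hsum, sub_zero, Finset.mul_sum]
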